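/- Let F be a field and let P₁, P₂ be monic polynomials over F of degrees ≥ 1, with companion matrices C_{P₁} and C_{P₂}. Then L(P₁) · L(P₂) = L(P), where the product on the left is the product of submodules of the sequence algebra ℕ → F and P = minpoly F (C_{P₁} ⊗ C_{P₂}) is the minimal polynomial of the Kronecker product of the companion matrices. -/

import Mathlib

open Polynomial Matrix
open scoped Kronecker

/-- `LinRec F P` is `L(P)`: for a polynomial `P` of degree `n`, the `F`-subspace of the
algebra of sequences `ℕ → F` consisting of the sequences `a` satisfying the linear
recurrence `∑_{i ≤ n} P.coeff i * a (k + i) = 0` for all `k ≥ 0` (for monic `P`, this is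
`a (k + n) + c_{n-1} a (k + n - 1) + ⋯ + c₀ a k = 0`). -/
def LinRec (F : Type*) [Field F] (P : Polynomial F) : Submodule F (ℕ → F) where
  carrier := {a | ∀ k : ℕ, ∑ i ∈ Finset.range (P.natDegree + 1), P.coeff i * a (k + i) = 0}
  add_mem' := by
    intro a b ha hb k
    simp only [Pi.add_apply, mul_add, Finset.sum_add_distrib, ha k, hb k, add_zero]
  zero_mem' := by
    intro k
    simp
  smul_mem' := by
    intro c a ha k
    simp only [Pi.smul_apply, smul_eq_mul]
    calc ∑ i ∈ Finset.range (P.natDegree + 1), P.coeff i * (c * a (k + i))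
        = c * ∑ i ∈ Finset.range (P.natDegree + 1), P.coeff i * a (k + i) := by
          rw [Finset.mul_sum]; exact Finset.sum_congr rfl fun i _ => by ring
      _ = 0 := by rw [ha k, mul_zero]

/-- The companion matrix of a polynomial `P` of degree `n`: the `n × n` matrix whose
`(i, n−1)` entry is `−P.coeff i` for `0 ≤ i ≤ n−1`, whose `(i+1, i)` entry is `1` for
`0 ≤ i ≤ n−2`, and whose other entries are `0`. -/
def companion {F : Type*} [Field F] (P : Polynomial F) :
    Matrix (Fin P.natDegree) (Fin P.natDegree) F :=
  Matrix.of fun i j =>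
    if (j : ℕ) = P.natDegree - 1 then -P.coeff i
    else if (i : ℕ) = (j : ℕ) + 1 then 1 else 0

set_option linter.unusedSectionVars false

section Aux

variable {F : Type*} [Field F] {ι : Type*} [Fintype ι] [DecidableEq ι]

lemma mem_linRec_iff {P : Polynomial F} {a : ℕ → F} :
    a ∈ LinRec F P ↔ ∀ k : ℕ,
      ∑ i ∈ Finset.range (P.natDegree + 1), P.coeff i * a (k + i) = 0 :=
  Iff.rfl

lemma sum_mulVec' {γ : Type*} (s : Finset γ) (A : γ → Matrix ι ι F) (v : ι → F) :
    (∑ i ∈ s, A i) *ᵥ v = ∑ i ∈ s, A i *ᵥ v := by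
  induction s using Finset.cons_induction with
  | empty => simp
  | cons a s ha ih => simp [Finset.sum_cons, Matrix.add_mulVec, ih]

lemma mulVec_sum' {γ : Type*} (s : Finset γ) (A : Matrix ι ι F) (v : γ → ι → F) :
    A *ᵥ (∑ i ∈ s, v i) = ∑ i ∈ s, A *ᵥ v i := by
  induction s using Finset.cons_induction with
  | empty => simp
  | cons a s ha ih => simp [Finset.sum_cons, Matrix.mulVec_add, ih]

lemma dotProduct_sum' {γ : Type*} (s : Finset γ) (w : ι → F) (v : γ → ι → F) :
    w ⬝ᵥ (∑ i ∈ s, v i) = ∑ i ∈ s, w ⬝ᵥ v i := by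
  induction s using Finset.cons_induction with
  | empty => simp
  | cons a s ha ih => simp [Finset.sum_cons, dotProduct_add, ih]

noncomputable def seqOf (M : Matrix ι ι F) (j₀ : ι) : (ι → F) →ₗ[F] (ℕ → F) where
  toFun w := fun k => w ⬝ᵥ ((M ^ k) *ᵥ Pi.single j₀ 1)
  map_add' u v := by funext k; simp [add_dotProduct]
  map_smul' c v := by funext k; simp [smul_dotProduct]

lemma seqOf_apply (M : Matrix ι ι F) (j₀ : ι) (w : ι → F) (k : ℕ) :
    seqOf M j₀ w k = w ⬝ᵥ ((M ^ k) *ᵥ Pi.single j₀ 1) := rfl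

/-- If `aeval M Q` kills the `j₀` basis vector, then every `seqOf M j₀ w` satisfies
the recurrence of `Q`. -/
lemma seqOf_mem_linRec {M : Matrix ι ι F} {j₀ : ι} {Q : Polynomial F}
    (hQ : (aeval M Q) *ᵥ Pi.single j₀ 1 = 0) (w : ι → F) :
    seqOf M j₀ w ∈ LinRec F Q := by
  intro k
  have key : ∑ i ∈ Finset.range (Q.natDegree + 1),
      Q.coeff i • ((M ^ (k + i)) *ᵥ Pi.single j₀ (1:F)) = 0 := by
    have h1 : ∀ i, Q.coeff i • ((M ^ (k + i)) *ᵥ Pi.single j₀ (1:F))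
        = (M ^ k) *ᵥ ((Q.coeff i • M ^ i) *ᵥ Pi.single j₀ 1) := by
      intro i
      rw [Matrix.smul_mulVec, Matrix.mulVec_smul, Matrix.mulVec_mulVec, ← pow_add]
    calc ∑ i ∈ Finset.range (Q.natDegree + 1), Q.coeff i • ((M ^ (k + i)) *ᵥ Pi.single j₀ (1:F))
        = (M ^ k) *ᵥ ((aeval M Q) *ᵥ Pi.single j₀ 1) := by
          rw [aeval_eq_sum_range, sum_mulVec', mulVec_sum']
          exact Finset.sum_congr rfl fun i _ => h1 i
      _ = 0 := by rw [hQ, Matrix.mulVec_zero]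
  calc ∑ i ∈ Finset.range (Q.natDegree + 1), Q.coeff i * (seqOf M j₀ w (k+i))
      = w ⬝ᵥ (∑ i ∈ Finset.range (Q.natDegree + 1),
          Q.coeff i • ((M ^ (k+i)) *ᵥ Pi.single j₀ 1)) := by
        rw [dotProduct_sum']
        exact Finset.sum_congr rfl fun i _ => by
          rw [dotProduct_smul, smul_eq_mul]; rfl
    _ = 0 := by rw [key, dotProduct_zero]

/-- Two sequences satisfying the recurrence of a monic polynomial of positive degree that
agree on the first `natDegree` values are equal. -/
lemma linRec_ext {Q : Polynomial F} (hQ : Q.Monic) {a b : ℕ → F}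
    (ha : a ∈ LinRec F Q) (hb : b ∈ LinRec F Q)
    (h0 : ∀ k < Q.natDegree, a k = b k) : a = b := by
  funext k
  induction k using Nat.strong_induction_on with
  | _ k ih =>
    rcases lt_or_ge k Q.natDegree with hk | hk
    · exact h0 k hk
    · obtain ⟨m, rfl⟩ : ∃ m, k = m + Q.natDegree := ⟨k - Q.natDegree, (Nat.sub_add_cancel hk).symm⟩
      have key : ∀ c : ℕ → F, c ∈ LinRec F Q →
          c (m + Q.natDegree) = -∑ i ∈ Finset.range Q.natDegree, Q.coeff i * c (m + i) := by
        intro c hc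
        have h := hc m
        rw [Finset.sum_range_succ, hQ.coeff_natDegree, one_mul] at h
        linear_combination h
      rw [key a ha, key b hb]
      congr 1
      refine Finset.sum_congr rfl fun i hi => ?_
      rw [ih (m + i) (by have := Finset.mem_range.1 hi; omega)]

/-- Given linearly independent vectors `x i` and targets `t i`, there is a `w` with
`w ⬝ᵥ x i = t i` for all `i`. -/
lemma exists_dotProduct_eq {d : ℕ} {x : Fin d → (ι → F)} (hx : LinearIndependent F x)
    (t : Fin d → F) : ∃ w : ι → F, ∀ i, w ⬝ᵥ x i = t i := by
  classical
  let p : Submodule F (ι → F) := Submodule.span F (Set.range x)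
  let B : Module.Basis (Fin d) F p := Module.Basis.span hx
  obtain ⟨f, hf⟩ := LinearMap.exists_extend (B.constr F t)
  have hfx : ∀ i, f (x i) = t i := by
    intro i
    have h1 : (⟨x i, Submodule.subset_span (Set.mem_range_self i)⟩ : p) = B i :=
      (Module.Basis.span_apply hx i).symm
    have h2 : f (x i) = (B.constr F) t (⟨x i, Submodule.subset_span (Set.mem_range_self i)⟩ : p) :=
      LinearMap.congr_fun hf (⟨x i, Submodule.subset_span (Set.mem_range_self i)⟩ : p)
    rw [h1, Module.Basis.constr_basis] at h2
    exact h2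
  refine ⟨fun j => f (Pi.single j 1), fun i => ?_⟩
  have hx' : x i = ∑ j, (x i j) • (Pi.single j 1 : ι → F) := by
    have h3 : ∑ j, (x i j) • (Pi.single j 1 : ι → F) = ∑ j, Pi.single j (x i j) :=
      Finset.sum_congr rfl fun j _ => by rw [← Pi.single_smul, smul_eq_mul, mul_one]
    rw [h3, Finset.univ_sum_single]
  calc (fun j => f (Pi.single j 1)) ⬝ᵥ x i
      = ∑ j, x i j * f (Pi.single j 1) := by
        simp [dotProduct, mul_comm]
    _ = f (x i) := by
        conv_rhs => rw [hx']
        rw [map_sum]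
        exact (Finset.sum_congr rfl fun j _ => by rw [f.map_smul, smul_eq_mul]).symm
    _ = t i := hfx i

/-- If the `j₀` basis vector separates polynomials in `M` (no nonzero annihilator of the
column), then the iterates `M ^ i *ᵥ e_{j₀}`, `i < deg (minpoly F M)`, are independent. -/
lemma sep_linearIndependent {M : Matrix ι ι F} {j₀ : ι} [Nonempty ι]
    (hsep : ∀ R : Polynomial F, (aeval M R) *ᵥ Pi.single j₀ 1 = 0 → aeval M R = 0) :
    LinearIndependent F
      (fun i : Fin (minpoly F M).natDegree => (M ^ (i : ℕ)) *ᵥ Pi.single j₀ (1:F)) := by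
  have hint : IsIntegral F M := Matrix.isIntegral M
  have hdpos : 0 < (minpoly F M).natDegree := minpoly.natDegree_pos hint
  rw [Fintype.linearIndependent_iff]
  intro g hg
  have hdpos' := hdpos
  set R : Polynomial F :=
    ∑ i : Fin (minpoly F M).natDegree, Polynomial.C (g i) * Polynomial.X ^ (i:ℕ) with hR
  have haev : aeval M R = ∑ i : Fin (minpoly F M).natDegree, g i • M ^ (i:ℕ) := by
    rw [hR, map_sum]
    exact Finset.sum_congr rfl fun i _ => by
      rw [_root_.map_mul, map_pow, aeval_C, aeval_X, Algebra.smul_def]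
  have hvec : (aeval M R) *ᵥ Pi.single j₀ 1 = 0 := by
    rw [haev, sum_mulVec']
    rw [← hg]
    exact Finset.sum_congr rfl fun i _ => by rw [Matrix.smul_mulVec]
  have hR0 : R = 0 := by
    by_contra hne
    have hdeg : R.natDegree ≤ (minpoly F M).natDegree - 1 := by
      apply Polynomial.natDegree_sum_le_of_forall_le
      intro i _
      calc (Polynomial.C (g i) * Polynomial.X ^ (i:ℕ)).natDegree
          ≤ (Polynomial.C (g i)).natDegree + (Polynomial.X ^ (i:ℕ) : Polynomial F).natDegree :=
            Polynomial.natDegree_mul_le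
        _ ≤ (minpoly F M).natDegree - 1 := by
            rw [Polynomial.natDegree_C, Polynomial.natDegree_X_pow]
            have := i.isLt
            omega
    have hle := minpoly.degree_le_of_ne_zero F M hne (hsep R hvec)
    have hle' : (minpoly F M).natDegree ≤ R.natDegree := Polynomial.natDegree_le_natDegree hle
    omega
  intro i
  have hcoeff : R.coeff (i:ℕ) = g i := by
    rw [hR, Polynomial.finset_sum_coeff]
    rw [Finset.sum_eq_single i]
    · rw [Polynomial.coeff_C_mul_X_pow]; simp
    · intro j _ hji
      rw [Polynomial.coeff_C_mul_X_pow]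
      have : (i:ℕ) ≠ (j:ℕ) := fun h => hji (Fin.ext h.symm)
      simp [this]
    · intro h; exact absurd (Finset.mem_univ i) h
  rw [← hcoeff, hR0, Polynomial.coeff_zero]

/-- When the `j₀` basis vector separates, the range of `seqOf M j₀` is exactly
`LinRec` of the minimal polynomial. -/
lemma range_seqOf_eq_linRec {M : Matrix ι ι F} {j₀ : ι} [Nonempty ι]
    (hsep : ∀ R : Polynomial F, (aeval M R) *ᵥ Pi.single j₀ 1 = 0 → aeval M R = 0) :
    LinearMap.range (seqOf M j₀) = LinRec F (minpoly F M) := by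
  have hint : IsIntegral F M := Matrix.isIntegral M
  have hmon := minpoly.monic hint
  have haev0 : (aeval M (minpoly F M)) *ᵥ Pi.single j₀ (1:F) = 0 := by
    rw [minpoly.aeval, Matrix.zero_mulVec]
  apply le_antisymm
  · rintro a ⟨w, rfl⟩
    exact seqOf_mem_linRec haev0 w
  · intro a ha
    obtain ⟨w, hw⟩ := exists_dotProduct_eq (sep_linearIndependent hsep)
      (fun i : Fin (minpoly F M).natDegree => a (i:ℕ))
    refine ⟨w, ?_⟩
    refine linRec_ext hmon (seqOf_mem_linRec haev0 w) ha fun k hk => ?_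
    exact hw ⟨k, hk⟩

end Aux

section Companion

variable {F : Type*} [Field F]

lemma companion_pow_mulVec (P : Polynomial F) (hd : 1 ≤ P.natDegree) {i : ℕ}
    (hi : i < P.natDegree) :
    (companion P ^ i) *ᵥ Pi.single (⟨0, hd⟩ : Fin P.natDegree) (1:F) = Pi.single ⟨i, hi⟩ 1 := by
  induction i with
  | zero => rw [pow_zero, Matrix.one_mulVec]
  | succ i ih =>
    have hi' : i < P.natDegree := Nat.lt_of_succ_lt hi
    rw [pow_succ', ← Matrix.mulVec_mulVec, ih hi', Matrix.mulVec_single]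
    funext r
    have hne : (i : ℕ) ≠ P.natDegree - 1 := by omega
    simp only [companion, Matrix.of_apply, Pi.single_apply, Fin.ext_iff]
    simp [hne]

lemma companion_aeval_mulVec (P : Polynomial F) (hP : P.Monic) (hd : 1 ≤ P.natDegree) :
    (aeval (companion P) P) *ᵥ Pi.single (⟨0, hd⟩ : Fin P.natDegree) (1:F) = 0 := by
  rw [aeval_eq_sum_range, sum_mulVec', Finset.sum_range_succ]
  have h1 : ∑ i ∈ Finset.range P.natDegree,
      (P.coeff i • companion P ^ i) *ᵥ Pi.single (⟨0, hd⟩ : Fin P.natDegree) (1:F)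
      = fun r : Fin P.natDegree => P.coeff (r : ℕ) := by
    rw [← Fin.sum_univ_eq_sum_range
      (fun i => (P.coeff i • companion P ^ i) *ᵥ Pi.single (⟨0, hd⟩ : Fin P.natDegree) (1:F))]
    have h2 : ∀ i : Fin P.natDegree,
        (P.coeff (i:ℕ) • companion P ^ (i:ℕ)) *ᵥ Pi.single (⟨0, hd⟩ : Fin P.natDegree) (1:F)
        = Pi.single i (P.coeff (i:ℕ)) := by
      intro i
      rw [Matrix.smul_mulVec, companion_pow_mulVec P hd i.isLt]
      funext r
      simp [Pi.single_apply, smul_eq_mul, Fin.ext_iff]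
    rw [Finset.sum_congr rfl fun i _ => h2 i]
    exact Finset.univ_sum_single _
  rw [h1]
  have hcoe : (P.coeff P.natDegree • companion P ^ P.natDegree) *ᵥ
      Pi.single (⟨0, hd⟩ : Fin P.natDegree) (1:F)
      = fun r : Fin P.natDegree => -P.coeff (r : ℕ) := by
    obtain ⟨m, hm⟩ : ∃ m, P.natDegree = m + 1 := ⟨P.natDegree - 1, by omega⟩
    have hmlt : m < P.natDegree := by omega
    have : companion P ^ P.natDegree *ᵥ Pi.single (⟨0, hd⟩ : Fin P.natDegree) (1:F)
        = companion P *ᵥ (companion P ^ m *ᵥ Pi.single (⟨0, hd⟩ : Fin P.natDegree) (1:F)) := by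
      rw [Matrix.mulVec_mulVec, ← pow_succ', ← hm]
    rw [hP.coeff_natDegree, one_smul, this, companion_pow_mulVec P hd hmlt,
      Matrix.mulVec_single]
    funext r
    have hmeq : (m : ℕ) = P.natDegree - 1 := by omega
    simp [companion, hmeq]
  rw [hcoe]
  funext r
  simp

lemma linRec_le_range (P : Polynomial F) (hP : P.Monic) (hd : 1 ≤ P.natDegree) :
    LinRec F P ≤ LinearMap.range (seqOf (companion P) (⟨0, hd⟩ : Fin P.natDegree)) := by
  intro a ha
  refine ⟨fun j : Fin P.natDegree => a (j : ℕ), ?_⟩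
  have key : ∀ k, (fun j : Fin P.natDegree => a (j : ℕ)) ᵥ* (companion P ^ k)
      = fun j : Fin P.natDegree => a (k + (j : ℕ)) := by
    intro k
    induction k with
    | zero => simp [Matrix.vecMul_one]
    | succ k ih =>
      rw [pow_succ, ← Matrix.vecMul_vecMul, ih]
      funext j
      have hstep : ((fun i : Fin P.natDegree => a (k + (i : ℕ))) ᵥ* companion P) j
          = ∑ i : Fin P.natDegree, a (k + (i : ℕ)) * companion P i j := rfl
      rw [hstep]
      rcases eq_or_ne ((j : ℕ)) (P.natDegree - 1) with hj | hj
      · have hrec := ha k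
        rw [Finset.sum_range_succ, hP.coeff_natDegree, one_mul] at hrec
        have hcol : ∀ i : Fin P.natDegree, companion P i j = -P.coeff (i : ℕ) := by
          intro i
          simp [companion, hj]
        rw [Finset.sum_congr rfl fun i _ => by rw [hcol i]]
        have hsum : ∑ i : Fin P.natDegree, a (k + (i : ℕ)) * (-P.coeff (i : ℕ))
            = -∑ i ∈ Finset.range P.natDegree, P.coeff i * a (k + i) := by
          rw [← Fin.sum_univ_eq_sum_range (fun i => P.coeff i * a (k + i)), ← Finset.sum_neg_distrib]
          exact Finset.sum_congr rfl fun i _ => by ring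
        rw [hsum]
        have hthis : a (k + P.natDegree) = -∑ i ∈ Finset.range P.natDegree, P.coeff i * a (k + i) := by
          linear_combination hrec
        have harg : k + 1 + (j : ℕ) = k + P.natDegree := by omega
        rw [harg]
        exact hthis.symm
      · have hjn : (j : ℕ) + 1 < P.natDegree := by
          have := j.isLt
          omega
        have hcol : ∀ i : Fin P.natDegree, companion P i j
            = if i = (⟨(j : ℕ) + 1, hjn⟩ : Fin P.natDegree) then 1 else 0 := by
          intro i
          simp [companion, hj, Fin.ext_iff]
        rw [Finset.sum_congr rfl fun i _ => by rw [hcol i]]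
        simp only [mul_ite, mul_one, mul_zero]
        rw [Finset.sum_ite_eq' Finset.univ (⟨(j : ℕ) + 1, hjn⟩ : Fin P.natDegree)
          (fun i : Fin P.natDegree => a (k + (i : ℕ)))]
        simp only [Finset.mem_univ, if_true]
        congr 1
        omega
  funext k
  rw [seqOf_apply, Matrix.dotProduct_mulVec, dotProduct_single, key k, mul_one]
  simp

lemma linRec_eq_range (P : Polynomial F) (hP : P.Monic) (hd : 1 ≤ P.natDegree) :
    LinRec F P = LinearMap.range (seqOf (companion P) (⟨0, hd⟩ : Fin P.natDegree)) := by
  refine le_antisymm (linRec_le_range P hP hd) ?_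
  rintro a ⟨w, rfl⟩
  exact seqOf_mem_linRec (companion_aeval_mulVec P hP hd) w

end Companion

section Kron

variable {F : Type*} [Field F] {ι κ : Type*} [Fintype ι] [DecidableEq ι]
  [Fintype κ] [DecidableEq κ]

lemma kron_pow (M₁ : Matrix ι ι F) (M₂ : Matrix κ κ F) (k : ℕ) :
    (M₁ ⊗ₖ M₂) ^ k = (M₁ ^ k) ⊗ₖ (M₂ ^ k) := by
  induction k with
  | zero => simp [Matrix.one_kronecker_one]
  | succ k ih => rw [pow_succ, pow_succ, pow_succ, ih, Matrix.mul_kronecker_mul]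

lemma single_prod (i₁ : ι) (i₂ : κ) :
    (Pi.single (i₁, i₂) (1:F) : ι × κ → F)
      = fun q : ι × κ => (Pi.single i₁ (1:F) : ι → F) q.1 * (Pi.single i₂ (1:F) : κ → F) q.2 := by
  funext q
  rcases q with ⟨q₁, q₂⟩
  by_cases h1 : q₁ = i₁ <;> by_cases h2 : q₂ = i₂ <;>
    simp [Pi.single_apply, Prod.ext_iff, h1, h2]

lemma kron_mulVec (A : Matrix ι ι F) (B : Matrix κ κ F) (u : ι → F) (v : κ → F) :
    (A ⊗ₖ B) *ᵥ (fun p : ι × κ => u p.1 * v p.2)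
      = fun p : ι × κ => ((A *ᵥ u : ι → F)) p.1 * ((B *ᵥ v : κ → F)) p.2 := by
  funext p
  rcases p with ⟨p₁, p₂⟩
  show ∑ q : ι × κ, (A ⊗ₖ B) (p₁, p₂) q * (u q.1 * v q.2) = _
  rw [Fintype.sum_prod_type]
  have : ∀ (q₁ : ι) (q₂ : κ),
      (A ⊗ₖ B) (p₁, p₂) (q₁, q₂) * (u q₁ * v q₂) = (A p₁ q₁ * u q₁) * (B p₂ q₂ * v q₂) := by
    intro q₁ q₂
    rw [Matrix.kroneckerMap_apply]
    ring
  calc ∑ q₁ : ι, ∑ q₂ : κ, (A ⊗ₖ B) (p₁, p₂) (q₁, q₂) * (u q₁ * v q₂)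
      = ∑ q₁ : ι, ∑ q₂ : κ, (A p₁ q₁ * u q₁) * (B p₂ q₂ * v q₂) :=
        Finset.sum_congr rfl fun q₁ _ => Finset.sum_congr rfl fun q₂ _ => this q₁ q₂
    _ = (∑ q₁ : ι, A p₁ q₁ * u q₁) * (∑ q₂ : κ, B p₂ q₂ * v q₂) := by
        rw [Finset.sum_mul_sum]
    _ = (A *ᵥ u) p₁ * (B *ᵥ v) p₂ := rfl

lemma seqOf_kron (M₁ : Matrix ι ι F) (M₂ : Matrix κ κ F) (j₁ : ι) (j₂ : κ)
    (w₁ : ι → F) (w₂ : κ → F) :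
    seqOf (M₁ ⊗ₖ M₂) (j₁, j₂) (fun p : ι × κ => w₁ p.1 * w₂ p.2)
      = seqOf M₁ j₁ w₁ * seqOf M₂ j₂ w₂ := by
  funext k
  show (fun p : ι × κ => w₁ p.1 * w₂ p.2) ⬝ᵥ (((M₁ ⊗ₖ M₂) ^ k) *ᵥ Pi.single (j₁, j₂) 1)
    = seqOf M₁ j₁ w₁ k * seqOf M₂ j₂ w₂ k
  rw [kron_pow, single_prod, kron_mulVec]
  show ∑ p : ι × κ, (w₁ p.1 * w₂ p.2) *
      (((M₁ ^ k) *ᵥ Pi.single j₁ 1) p.1 * ((M₂ ^ k) *ᵥ Pi.single j₂ 1) p.2) = _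
  rw [Fintype.sum_prod_type]
  calc ∑ p₁ : ι, ∑ p₂ : κ, (w₁ p₁ * w₂ p₂) *
        (((M₁ ^ k) *ᵥ Pi.single j₁ 1) p₁ * ((M₂ ^ k) *ᵥ Pi.single j₂ 1) p₂)
      = ∑ p₁ : ι, ∑ p₂ : κ, (w₁ p₁ * ((M₁ ^ k) *ᵥ Pi.single j₁ 1) p₁) *
        (w₂ p₂ * ((M₂ ^ k) *ᵥ Pi.single j₂ 1) p₂) :=
        Finset.sum_congr rfl fun p₁ _ => Finset.sum_congr rfl fun p₂ _ => by ring
    _ = (∑ p₁ : ι, w₁ p₁ * ((M₁ ^ k) *ᵥ Pi.single j₁ 1) p₁) *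
        (∑ p₂ : κ, w₂ p₂ * ((M₂ ^ k) *ᵥ Pi.single j₂ 1) p₂) := by
        rw [Finset.sum_mul_sum]
    _ = _ := rfl

lemma range_mul_range (M₁ : Matrix ι ι F) (M₂ : Matrix κ κ F) (j₁ : ι) (j₂ : κ) :
    LinearMap.range (seqOf M₁ j₁) * LinearMap.range (seqOf M₂ j₂)
      = LinearMap.range (seqOf (M₁ ⊗ₖ M₂) (j₁, j₂)) := by
  apply le_antisymm
  · rw [Submodule.mul_le]
    rintro a ⟨w₁, rfl⟩ b ⟨w₂, rfl⟩
    exact ⟨fun p : ι × κ => w₁ p.1 * w₂ p.2, seqOf_kron M₁ M₂ j₁ j₂ w₁ w₂⟩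
  · rintro a ⟨w, rfl⟩
    have hw : w = ∑ p : ι × κ, w p • (Pi.single p 1 : ι × κ → F) := by
      have h3 : ∑ p : ι × κ, w p • (Pi.single p 1 : ι × κ → F)
          = ∑ p : ι × κ, Pi.single p (w p) :=
        Finset.sum_congr rfl fun p _ => by rw [← Pi.single_smul, smul_eq_mul, mul_one]
      rw [h3, Finset.univ_sum_single]
    rw [hw, map_sum]
    refine Submodule.sum_mem _ fun p _ => ?_
    rw [LinearMap.map_smul]
    refine Submodule.smul_mem _ _ ?_
    rcases p with ⟨p₁, p₂⟩
    rw [single_prod, seqOf_kron]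
    exact Submodule.mul_mem_mul (LinearMap.mem_range_self _ _) (LinearMap.mem_range_self _ _)

lemma sep_kron (P₁ P₂ : Polynomial F) (hd₁ : 1 ≤ P₁.natDegree) (hd₂ : 1 ≤ P₂.natDegree) :
    ∀ R : Polynomial F,
      (aeval (companion P₁ ⊗ₖ companion P₂) R) *ᵥ
        Pi.single ((⟨0, hd₁⟩, ⟨0, hd₂⟩) : Fin P₁.natDegree × Fin P₂.natDegree) 1 = 0 →
      aeval (companion P₁ ⊗ₖ companion P₂) R = 0 := by
  intro R hR
  set M := companion P₁ ⊗ₖ companion P₂ with hM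
  set A := aeval M R with hA
  suffices h : ∀ q : Fin P₁.natDegree × Fin P₂.natDegree, A *ᵥ Pi.single q 1 = 0 by
    ext p q
    have h2 := congrFun (h q) p
    simpa [Matrix.mulVec_single] using h2
  rintro ⟨q₁, q₂⟩
  set N := (companion P₁ ^ (q₁ : ℕ)) ⊗ₖ (companion P₂ ^ (q₂ : ℕ)) with hN
  have hq : (Pi.single ((q₁, q₂) : Fin P₁.natDegree × Fin P₂.natDegree) (1:F))
      = N *ᵥ Pi.single ((⟨0, hd₁⟩, ⟨0, hd₂⟩) : Fin P₁.natDegree × Fin P₂.natDegree) 1 := by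
    rw [single_prod, hN, single_prod, kron_mulVec, companion_pow_mulVec P₁ hd₁ q₁.isLt,
      companion_pow_mulVec P₂ hd₂ q₂.isLt]
  have hcommMN : Commute M N := by
    show M * N = N * M
    rw [hM, hN, ← Matrix.mul_kronecker_mul, ← Matrix.mul_kronecker_mul]
    rw [← pow_succ', ← pow_succ, ← pow_succ', ← pow_succ]
  have hcommAN : Commute N A := by
    rw [hA, aeval_eq_sum_range]
    refine Commute.sum_right _ _ _ fun i _ => ?_
    exact (hcommMN.symm.pow_right i).smul_right _
  rw [hq, Matrix.mulVec_mulVec, ← hcommAN.eq, ← Matrix.mulVec_mulVec, hR, Matrix.mulVec_zero]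

end Kron

/-- Let `F` be a field and `P₁`, `P₂` monic polynomials over `F` of degrees `≥ 1`, with
companion matrices `C_{P₁}` and `C_{P₂}`.  Then `L(P₁) · L(P₂) = L(P)` where
`P = minpoly F (C_{P₁} ⊗ C_{P₂})` is the minimal polynomial of the Kronecker product of
the companion matrices. -/
theorem linRec_mul_linRec (F : Type*) [Field F] (P₁ P₂ : Polynomial F)
    (h₁ : P₁.Monic) (h₂ : P₂.Monic) (hd₁ : 1 ≤ P₁.natDegree) (hd₂ : 1 ≤ P₂.natDegree) :
    LinRec F P₁ * LinRec F P₂ = LinRec F (minpoly F (companion P₁ ⊗ₖ companion P₂)) := by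
  haveI : Nonempty (Fin P₁.natDegree × Fin P₂.natDegree) := ⟨(⟨0, hd₁⟩, ⟨0, hd₂⟩)⟩
  rw [linRec_eq_range P₁ h₁ hd₁, linRec_eq_range P₂ h₂ hd₂, range_mul_range,
    range_seqOf_eq_linRec (sep_kron P₁ P₂ hd₁ hd₂)]
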